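/- Let H be a real Hilbert space, d ≥ 1 an integer, C ⊆ H a nonempty closed convex set with ‖x − y‖ ≤ d for all x, y ∈ C, T_1, …, T_N : C → C nonexpansive (N ≥ 1), and G : C → C a τ-contraction (0 ≤ τ < 1). Let (λ_n) ⊆ (0,1] with moduli χ, φ₃, φ₄ as follows: λ_n ≤ 1/k for all n ≥ χ(k); φ₃(δ, n) ≥ n and Π_{i=n}^{m}(1 − λ_i(1−τ)) ≤ δ for all m ≥ φ₃(δ, n); Σ_{i=φ₄(δ)}^{∞} |λ_{i+N} − λ_i| ≤ δ; and set χ̂(δ) := max{φ₃(δ/(4d), φ₄(δ/(4d)) + N), χ(⌈2Nd/δ⌉)}. Suppose ρ : (0,∞) → (0,∞) satisfies: for every j ∈ {0,…,N−1}, every y ∈ C and every δ > 0, if ‖(T_{[j+N]} ∘ ⋯ ∘ T_{[j+1]})(y) − y‖ ≤ ρ(δ) then ‖T_i(y) − y‖ ≤ δ for all i ∈ {1,…,N}. Let u₀ ∈ C and u_{n+1} := (1−λ_{n+1})·T_{[n+1]}(u_n) + λ_{n+1}·G(T_{[n+1]}(u_n)). Then for every j ∈ {0,…,N−1}, every ε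 > 0 and every n ≥ χ̂(ρ(ε/N)): ‖u_n − (T_{[j+N]} ∘ ⋯ ∘ T_{[j+1]})(u_n)‖ ≤ ε. -/

import Mathlib

open scoped RealInnerProductSpace

/-- `cyc N m` is the unique index in `{1, …, N}` congruent to `m` modulo `N`. -/
def cyc (N m : ℕ) : ℕ := if m % N = 0 then N else m % N

/-- `compShift T N s` is the composition `T [N+s] ∘ ⋯ ∘ T [1+s]`
(apply `T [1+s]` first, then `T [2+s]`, …, finally `T [N+s]`). -/
def compShift {H : Type*} (T : ℕ → H → H) (N s : ℕ) (x : H) : H :=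
  (List.range N).foldl (fun y j => T (cyc N (j + 1 + s)) y) x

/-- `chiHat` is the rate `χ̂(δ) := max{φ₃(δ/(4d), φ₄(δ/(4d)) + N), χ(⌈2Nd/δ⌉)}`. -/
noncomputable def chiHat (d N : ℕ) (χ : ℕ → ℕ) (φ₃ : ℝ → ℕ → ℕ) (φ₄ : ℝ → ℕ) (δ : ℝ) : ℕ :=
  max (φ₃ (δ / (4 * (d : ℝ))) (φ₄ (δ / (4 * (d : ℝ))) + N)) (χ ⌈2 * (N : ℝ) * (d : ℝ) / δ⌉₊)

set_option maxHeartbeats 1000000 in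
/-- Quantitative asymptotic regularity of the hybrid steepest descent iteration with
respect to every cyclic-order composition of the finite family. -/
theorem hsdm_family_asymptotic_regularity_cyclic
    {H : Type*} [NormedAddCommGroup H] [InnerProductSpace ℝ H] [CompleteSpace H]
    (d : ℕ) (hd : 1 ≤ d)
    (C : Set H) (hne : C.Nonempty) (hcl : IsClosed C) (hcv : Convex ℝ C)
    (hbd : ∀ x ∈ C, ∀ y ∈ C, ‖x - y‖ ≤ (d : ℝ))
    (N : ℕ) (hN : 1 ≤ N) (T : ℕ → H → H)
    (hTm : ∀ i ∈ Finset.Icc 1 N, Set.MapsTo (T i) C C)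
    (hT : ∀ i ∈ Finset.Icc 1 N, ∀ x ∈ C, ∀ y ∈ C, ‖T i x - T i y‖ ≤ ‖x - y‖)
    (τ : ℝ) (hτ0 : 0 ≤ τ) (hτ1 : τ < 1)
    (G : H → H) (hGm : Set.MapsTo G C C)
    (hG : ∀ x ∈ C, ∀ y ∈ C, ‖G x - G y‖ ≤ τ * ‖x - y‖)
    (lam : ℕ → ℝ) (hlam : ∀ n, lam n ∈ Set.Ioc (0 : ℝ) 1)
    (χ : ℕ → ℕ) (hχ : ∀ k : ℕ, 1 ≤ k → ∀ n ≥ χ k, lam n ≤ 1 / (k : ℝ))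
    (φ₃ : ℝ → ℕ → ℕ)
    (hφ₃ge : ∀ δ : ℝ, 0 < δ → ∀ n : ℕ, n ≤ φ₃ δ n)
    (hφ₃ : ∀ δ : ℝ, 0 < δ → ∀ n : ℕ, ∀ m ≥ φ₃ δ n,
      ∏ i ∈ Finset.Icc n m, (1 - lam i * (1 - τ)) ≤ δ)
    (φ₄ : ℝ → ℕ)
    (hφ₄ : ∀ δ : ℝ, 0 < δ → ∀ m : ℕ,
      ∑ i ∈ Finset.Icc (φ₄ δ) m, |lam (i + N) - lam i| ≤ δ)
    (ρ : ℝ → ℝ) (hρpos : ∀ δ : ℝ, 0 < δ → 0 < ρ δ)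
    (hρ : ∀ j < N, ∀ y ∈ C, ∀ δ : ℝ, 0 < δ → ‖compShift T N j y - y‖ ≤ ρ δ →
      ∀ i ∈ Finset.Icc 1 N, ‖T i y - y‖ ≤ δ)
    (u : ℕ → H) (hu0 : u 0 ∈ C)
    (hrec : ∀ n, u (n + 1) = (1 - lam (n + 1)) • T (cyc N (n + 1)) (u n) +
      lam (n + 1) • G (T (cyc N (n + 1)) (u n))) :
    ∀ j < N, ∀ ε : ℝ, 0 < ε → ∀ n ≥ chiHat d N χ φ₃ φ₄ (ρ (ε / N)),
      ‖u n - compShift T N j (u n)‖ ≤ ε := by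

  have hNpos : 0 < N := hN
  have hNR : (0:ℝ) < N := by exact_mod_cast hN
  have hD0 : (0:ℝ) < d := by exact_mod_cast Nat.lt_of_lt_of_le Nat.zero_lt_one hd
  have hdne : (d:ℝ) ≠ 0 := ne_of_gt hD0
  have hcyc : ∀ m, cyc N m ∈ Finset.Icc 1 N := by
    intro m
    simp only [cyc]
    split_ifs with h
    · simp only [Finset.mem_Icc]; omega
    · have := Nat.mod_lt m hNpos
      simp only [Finset.mem_Icc]; omega
  have uC : ∀ m, u m ∈ C := by
    intro m
    induction m with
    | zero => exact hu0
    | succ m ih =>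
      rw [hrec m]
      have h1 : T (cyc N (m+1)) (u m) ∈ C := hTm _ (hcyc _) ih
      have h2 : G (T (cyc N (m+1)) (u m)) ∈ C := hGm h1
      have hl := hlam (m+1)
      exact hcv h1 h2 (by linarith [hl.2]) hl.1.le (by ring)
  have hqnn : ∀ i, 0 ≤ 1 - lam i * (1 - τ) := by
    intro i; have hl := hlam i; nlinarith [hl.1, hl.2]
  have hqle : ∀ i, 1 - lam i * (1-τ) ≤ 1 := by
    intro i; have hl := hlam i; nlinarith [hl.1]
  have hcycN : ∀ m, cyc N (m + N) = cyc N m := by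
    intro m; simp only [cyc, Nat.add_mod_right]
  -- key recursive inequality
  have key : ∀ m, ‖u (m+1+N) - u (m+1)‖ ≤
      (1 - lam (m+1) * (1-τ)) * ‖u (m+N) - u m‖ + (d:ℝ) * |lam (m+1+N) - lam (m+1)| := by
    intro m
    have hm1 : m+1+N = m+N+1 := by omega
    have hcc : cyc N (m+N+1) = cyc N (m+1) := by
      rw [show m+N+1 = (m+1)+N from by omega, hcycN]
    have hvC : u m ∈ C := uC m
    have hwC : u (m+N) ∈ C := uC (m+N)
    have hTvC : T (cyc N (m+1)) (u m) ∈ C := hTm _ (hcyc _) hvC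
    have hTwC : T (cyc N (m+1)) (u (m+N)) ∈ C := hTm _ (hcyc _) hwC
    have heq : u (m+1+N) - u (m+1) =
        (1 - lam (m+1)) • (T (cyc N (m+1)) (u (m+N)) - T (cyc N (m+1)) (u m))
          + lam (m+1) • (G (T (cyc N (m+1)) (u (m+N))) - G (T (cyc N (m+1)) (u m)))
          + (lam (m+1) - lam (m+N+1)) •
              (T (cyc N (m+1)) (u (m+N)) - G (T (cyc N (m+1)) (u (m+N)))) := by
      rw [hm1, hrec (m+N), hrec m, hcc]
      module
    rw [heq, hm1]
    have h1 : ‖T (cyc N (m+1)) (u (m+N)) - T (cyc N (m+1)) (u m)‖ ≤ ‖u (m+N) - u m‖ :=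
      hT _ (hcyc _) _ hwC _ hvC
    have h2 : ‖G (T (cyc N (m+1)) (u (m+N))) - G (T (cyc N (m+1)) (u m))‖ ≤
        τ * ‖T (cyc N (m+1)) (u (m+N)) - T (cyc N (m+1)) (u m)‖ := hG _ hTwC _ hTvC
    have h3 : ‖T (cyc N (m+1)) (u (m+N)) - G (T (cyc N (m+1)) (u (m+N)))‖ ≤ (d:ℝ) :=
      hbd _ hTwC _ (hGm hTwC)
    have hl := hlam (m+1)
    have tri := norm_add₃_le (E := H)
      (a := (1 - lam (m+1)) • (T (cyc N (m+1)) (u (m+N)) - T (cyc N (m+1)) (u m)))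
      (b := lam (m+1) • (G (T (cyc N (m+1)) (u (m+N))) - G (T (cyc N (m+1)) (u m))))
      (c := (lam (m+1) - lam (m+N+1)) •
              (T (cyc N (m+1)) (u (m+N)) - G (T (cyc N (m+1)) (u (m+N)))))
    rw [norm_smul, norm_smul, norm_smul, Real.norm_eq_abs, Real.norm_eq_abs, Real.norm_eq_abs,
      abs_of_nonneg (by linarith [hl.2] : (0:ℝ) ≤ 1 - lam (m+1)), abs_of_nonneg hl.1.le,
      abs_sub_comm (lam (m+1)) (lam (m+N+1))] at tri
    nlinarith [norm_nonneg (T (cyc N (m+1)) (u (m+N)) - T (cyc N (m+1)) (u m)),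
      norm_nonneg (u (m+N) - u m),
      abs_nonneg (lam (m+N+1) - lam (m+1)), hl.1, hl.2,
      mul_le_mul_of_nonneg_left h1 (by linarith [hl.2] : (0:ℝ) ≤ 1 - lam (m+1)),
      mul_le_mul_of_nonneg_left h2 hl.1.le,
      mul_le_mul_of_nonneg_left h1 (mul_nonneg hl.1.le hτ0),
      mul_le_mul_of_nonneg_left h3 (abs_nonneg (lam (m+N+1) - lam (m+1)))]
  -- unrolled inequality
  have unroll : ∀ n₀ m, n₀ ≤ m → ‖u (m+N) - u m‖ ≤
      (∏ i ∈ Finset.Icc (n₀+1) m, (1 - lam i * (1-τ))) * d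
        + (d:ℝ) * ∑ i ∈ Finset.Icc (n₀+1) m, |lam (i+N) - lam i| := by
    intro n₀ m hm
    induction m, hm using Nat.le_induction with
    | base =>
      rw [Finset.Icc_eq_empty (by omega), Finset.prod_empty, Finset.sum_empty]
      simpa using hbd _ (uC (n₀+N)) _ (uC n₀)
    | succ m hm ih =>
      have hk := key m
      rw [Finset.prod_Icc_succ_top (by omega), Finset.sum_Icc_succ_top (by omega)]
      have hP : 0 ≤ ∏ i ∈ Finset.Icc (n₀+1) m, (1 - lam i * (1-τ)) :=
        Finset.prod_nonneg fun i _ => hqnn i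
      have hS : 0 ≤ ∑ i ∈ Finset.Icc (n₀+1) m, |lam (i+N) - lam i| :=
        Finset.sum_nonneg fun i _ => abs_nonneg _
      have hq1 := hqle (m+1)
      have hq0 := hqnn (m+1)
      nlinarith [mul_le_mul_of_nonneg_left ih hq0, norm_nonneg (u (m+N) - u m),
        abs_nonneg (lam (m+1+N) - lam (m+1)),
        mul_nonneg (sub_nonneg.2 hq1) (mul_nonneg hD0.le hS)]
  -- partial compositions stay in C
  have foldC : ∀ s k, ∀ x ∈ C,
      (List.range k).foldl (fun y j' => T (cyc N (j'+1+s)) y) x ∈ C := by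
    intro s k
    induction k with
    | zero => intro x hx; simpa using hx
    | succ k ih =>
      intro x hx
      rw [List.range_succ, List.foldl_append]
      simp only [List.foldl_cons, List.foldl_nil]
      exact hTm _ (hcyc _) (ih x hx)
  -- begin main argument
  intro j hj ε hε n hn
  have hεN : 0 < ε / N := div_pos hε hNR
  have hδ : 0 < ρ (ε / N) := hρpos _ hεN
  have hnmax : max (φ₃ (ρ (ε/N)/(4*(d:ℝ))) (φ₄ (ρ (ε/N)/(4*(d:ℝ))) + N))
      (χ ⌈2 * (N:ℝ) * (d:ℝ) / ρ (ε/N)⌉₊) ≤ n := hn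
  have hδ' : 0 < ρ (ε/N)/(4*(d:ℝ)) := by positivity
  have hn1 : φ₃ (ρ (ε/N)/(4*(d:ℝ))) (φ₄ (ρ (ε/N)/(4*(d:ℝ))) + N) ≤ n :=
    le_trans (le_max_left _ _) hnmax
  have hn2 : χ ⌈2 * (N:ℝ) * (d:ℝ) / ρ (ε/N)⌉₊ ≤ n := le_trans (le_max_right _ _) hnmax
  set n₀ := φ₄ (ρ (ε/N)/(4*(d:ℝ))) with hn₀def
  have hge : n₀ + N ≤ φ₃ (ρ (ε/N)/(4*(d:ℝ))) (n₀ + N) := hφ₃ge _ hδ' _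
  have hn₀n : n₀ + N ≤ n := le_trans hge hn1
  -- bound on ‖u (n+N) - u n‖
  have han : ‖u (n+N) - u n‖ ≤ ρ (ε/N)/2 := by
    have h := unroll n₀ n (by omega)
    have hsub : Finset.Icc (n₀+N) n ⊆ Finset.Icc (n₀+1) n :=
      Finset.Icc_subset_Icc (by omega) le_rfl
    have hPle : (∏ i ∈ Finset.Icc (n₀+1) n, (1 - lam i * (1-τ))) ≤ ρ (ε/N)/(4*(d:ℝ)) := by
      have hsplit := Finset.prod_sdiff (f := fun i => (1 - lam i * (1-τ))) hsub
      have hA : (∏ i ∈ Finset.Icc (n₀+1) n \ Finset.Icc (n₀+N) n, (1 - lam i * (1-τ))) ≤ 1 :=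
        Finset.prod_le_one (fun i _ => hqnn i) (fun i _ => hqle i)
      have hB0 : 0 ≤ ∏ i ∈ Finset.Icc (n₀+N) n, (1 - lam i * (1-τ)) :=
        Finset.prod_nonneg fun i _ => hqnn i
      have hB : (∏ i ∈ Finset.Icc (n₀+N) n, (1 - lam i * (1-τ))) ≤ ρ (ε/N)/(4*(d:ℝ)) :=
        hφ₃ _ hδ' (n₀+N) n hn1
      calc (∏ i ∈ Finset.Icc (n₀+1) n, (1 - lam i * (1-τ)))
          = (∏ i ∈ Finset.Icc (n₀+1) n \ Finset.Icc (n₀+N) n, (1 - lam i * (1-τ)))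
            * ∏ i ∈ Finset.Icc (n₀+N) n, (1 - lam i * (1-τ)) := hsplit.symm
        _ ≤ ∏ i ∈ Finset.Icc (n₀+N) n, (1 - lam i * (1-τ)) :=
            mul_le_of_le_one_left hB0 hA
        _ ≤ _ := hB
    have hSle : (∑ i ∈ Finset.Icc (n₀+1) n, |lam (i+N) - lam i|) ≤ ρ (ε/N)/(4*(d:ℝ)) := by
      have hsub2 : Finset.Icc (n₀+1) n ⊆ Finset.Icc n₀ n :=
        Finset.Icc_subset_Icc (by omega) le_rfl
      calc (∑ i ∈ Finset.Icc (n₀+1) n, |lam (i+N) - lam i|)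
          ≤ ∑ i ∈ Finset.Icc n₀ n, |lam (i+N) - lam i| :=
            Finset.sum_le_sum_of_subset_of_nonneg hsub2 (fun i _ _ => abs_nonneg _)
        _ ≤ _ := hφ₄ _ hδ' n
    have hkey : (ρ (ε/N)/(4*(d:ℝ))) * d + (d:ℝ) * (ρ (ε/N)/(4*(d:ℝ))) = ρ (ε/N)/2 := by
      field_simp; ring
    have hS0 : 0 ≤ ∑ i ∈ Finset.Icc (n₀+1) n, |lam (i+N) - lam i| :=
      Finset.sum_nonneg fun i _ => abs_nonneg _
    nlinarith [mul_le_mul_of_nonneg_right hPle hD0.le,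
      mul_le_mul_of_nonneg_left hSle hD0.le]
  -- λ-step bound
  have step1 : ∀ m, ‖u (m+1) - T (cyc N (m+1)) (u m)‖ ≤ lam (m+1) * d := by
    intro m
    have hTC : T (cyc N (m+1)) (u m) ∈ C := hTm _ (hcyc _) (uC m)
    rw [hrec m]
    have heq : (1 - lam (m+1)) • T (cyc N (m+1)) (u m)
        + lam (m+1) • G (T (cyc N (m+1)) (u m)) - T (cyc N (m+1)) (u m)
        = lam (m+1) • (G (T (cyc N (m+1)) (u m)) - T (cyc N (m+1)) (u m)) := by module
    rw [heq, norm_smul, Real.norm_eq_abs, abs_of_pos (hlam (m+1)).1]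
    exact mul_le_mul_of_nonneg_left (hbd _ (hGm hTC) _ hTC) (hlam (m+1)).1.le
  -- telescoping bound
  have tele : ∀ k, ‖u (n+k) - (List.range k).foldl (fun y j' => T (cyc N (j'+1+n)) y) (u n)‖
      ≤ (∑ i ∈ Finset.Icc 1 k, lam (n+i)) * d := by
    intro k
    induction k with
    | zero => simp
    | succ k ih =>
      rw [List.range_succ, List.foldl_append]
      simp only [List.foldl_cons, List.foldl_nil]
      rw [show k+1+n = n+k+1 from by omega]
      have hQC : (List.range k).foldl (fun y j' => T (cyc N (j'+1+n)) y) (u n) ∈ C :=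
        foldC n k (u n) (uC n)
      have hstep := step1 (n+k)
      have h2 : ‖T (cyc N (n+k+1)) (u (n+k))
          - T (cyc N (n+k+1)) ((List.range k).foldl (fun y j' => T (cyc N (j'+1+n)) y) (u n))‖
          ≤ ‖u (n+k) - (List.range k).foldl (fun y j' => T (cyc N (j'+1+n)) y) (u n)‖ :=
        hT _ (hcyc _) _ (uC (n+k)) _ hQC
      have tri : ‖u (n+(k+1))
          - T (cyc N (n+k+1)) ((List.range k).foldl (fun y j' => T (cyc N (j'+1+n)) y) (u n))‖
          ≤ ‖u (n+k+1) - T (cyc N (n+k+1)) (u (n+k))‖ + ‖T (cyc N (n+k+1)) (u (n+k))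
          - T (cyc N (n+k+1)) ((List.range k).foldl (fun y j' => T (cyc N (j'+1+n)) y) (u n))‖ := by
        rw [show n+(k+1) = n+k+1 from by omega]
        simpa [sub_add_sub_cancel] using norm_add_le
          (u (n+k+1) - T (cyc N (n+k+1)) (u (n+k)))
          (T (cyc N (n+k+1)) (u (n+k))
            - T (cyc N (n+k+1)) ((List.range k).foldl (fun y j' => T (cyc N (j'+1+n)) y) (u n)))
      rw [Finset.sum_Icc_succ_top (by omega : 1 ≤ k+1)]
      have hidx : ‖u (n+k+1) - T (cyc N (n+k+1)) (u (n+k))‖ ≤ lam (n+(k+1)) * d := by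
        rw [show n+(k+1) = n+k+1 from by omega] ; exact hstep
      nlinarith [tri, h2, ih]
  -- bound on the lambda sum
  have hK1 : 1 ≤ ⌈2 * (N:ℝ) * (d:ℝ) / ρ (ε/N)⌉₊ := Nat.one_le_ceil_iff.2 (by positivity)
  have hKR : (0:ℝ) < (⌈2 * (N:ℝ) * (d:ℝ) / ρ (ε/N)⌉₊ : ℝ) := by exact_mod_cast hK1
  have hsumlam : (∑ i ∈ Finset.Icc 1 N, lam (n+i)) * d ≤ ρ (ε/N)/2 := by
    have h1 : ∑ i ∈ Finset.Icc 1 N, lam (n+i)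
        ≤ (Finset.Icc 1 N).card • (1/(⌈2 * (N:ℝ) * (d:ℝ) / ρ (ε/N)⌉₊ : ℝ)) :=
      Finset.sum_le_card_nsmul _ _ _ (fun i _ => hχ _ hK1 (n+i) (by omega))
    rw [Nat.card_Icc, show N+1-1 = N from by omega, nsmul_eq_mul] at h1
    have hceil : 2 * (N:ℝ) * (d:ℝ) / ρ (ε/N) ≤ (⌈2 * (N:ℝ) * (d:ℝ) / ρ (ε/N)⌉₊ : ℝ) :=
      Nat.le_ceil _
    have h2 : 2 * (N:ℝ) * (d:ℝ) ≤ (⌈2 * (N:ℝ) * (d:ℝ) / ρ (ε/N)⌉₊ : ℝ) * ρ (ε/N) :=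
      (div_le_iff₀ hδ).1 hceil
    have h3 : (N:ℝ) * (1/(⌈2 * (N:ℝ) * (d:ℝ) / ρ (ε/N)⌉₊ : ℝ)) * d ≤ ρ (ε/N)/2 := by
      rw [mul_one_div, div_mul_eq_mul_div, div_le_div_iff₀ hKR (by norm_num : (0:ℝ) < 2)]
      linarith [h2]
    have hlamnn : 0 ≤ ∑ i ∈ Finset.Icc 1 N, lam (n+i) :=
      Finset.sum_nonneg fun i _ => (hlam (n+i)).1.le
    calc (∑ i ∈ Finset.Icc 1 N, lam (n+i)) * d
        ≤ ((N:ℝ) * (1/(⌈2 * (N:ℝ) * (d:ℝ) / ρ (ε/N)⌉₊ : ℝ))) * d :=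
          mul_le_mul_of_nonneg_right h1 hD0.le
      _ ≤ ρ (ε/N)/2 := h3
  -- bound on the cyclic composition at shift n
  have hcompn : ‖compShift T N (n % N) (u n) - u n‖ ≤ ρ (ε/N) := by
    have hfun : (fun (y:H) j' => T (cyc N (j'+1+(n % N))) y)
        = (fun (y:H) j' => T (cyc N (j'+1+n)) y) := by
      funext y j'
      have : cyc N (j'+1+(n % N)) = cyc N (j'+1+n) := by
        simp only [cyc, Nat.add_mod_mod]
      rw [this]
    have heqc : compShift T N (n % N) (u n) = compShift T N n (u n) := by
      unfold compShift; rw [hfun]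
    rw [heqc, norm_sub_rev]
    have t := tele N
    have hF : compShift T N n (u n)
        = (List.range N).foldl (fun y j' => T (cyc N (j'+1+n)) y) (u n) := rfl
    rw [hF]
    have tri : ‖u n - (List.range N).foldl (fun y j' => T (cyc N (j'+1+n)) y) (u n)‖
        ≤ ‖u n - u (n+N)‖
          + ‖u (n+N) - (List.range N).foldl (fun y j' => T (cyc N (j'+1+n)) y) (u n)‖ := by
      simpa [sub_add_sub_cancel] using norm_add_le (u n - u (n+N))
        (u (n+N) - (List.range N).foldl (fun y j' => T (cyc N (j'+1+n)) y) (u n))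
    rw [norm_sub_rev (u n) (u (n+N))] at tri
    linarith
  -- apply the modulus ρ
  have hTi : ∀ i ∈ Finset.Icc 1 N, ‖T i (u n) - u n‖ ≤ ε/N :=
    hρ (n % N) (Nat.mod_lt _ hNpos) (u n) (uC n) (ε/N) hεN hcompn
  -- conclude for the given shift j
  have final : ∀ k, ‖u n - (List.range k).foldl (fun y j' => T (cyc N (j'+1+j)) y) (u n)‖
      ≤ k * (ε/N) := by
    intro k
    induction k with
    | zero => simp
    | succ k ih =>
      rw [List.range_succ, List.foldl_append]
      simp only [List.foldl_cons, List.foldl_nil]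
      have hQC : (List.range k).foldl (fun y j' => T (cyc N (j'+1+j)) y) (u n) ∈ C :=
        foldC j k (u n) (uC n)
      have h1 : ‖u n - T (cyc N (k+1+j)) (u n)‖ ≤ ε/N := by
        rw [norm_sub_rev]; exact hTi _ (hcyc _)
      have h2 : ‖T (cyc N (k+1+j)) (u n)
          - T (cyc N (k+1+j)) ((List.range k).foldl (fun y j' => T (cyc N (j'+1+j)) y) (u n))‖
          ≤ ‖u n - (List.range k).foldl (fun y j' => T (cyc N (j'+1+j)) y) (u n)‖ :=
        hT _ (hcyc _) _ (uC n) _ hQC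
      have tri : ‖u n
          - T (cyc N (k+1+j)) ((List.range k).foldl (fun y j' => T (cyc N (j'+1+j)) y) (u n))‖
          ≤ ‖u n - T (cyc N (k+1+j)) (u n)‖ + ‖T (cyc N (k+1+j)) (u n)
          - T (cyc N (k+1+j)) ((List.range k).foldl (fun y j' => T (cyc N (j'+1+j)) y) (u n))‖ := by
        simpa [sub_add_sub_cancel] using norm_add_le
          (u n - T (cyc N (k+1+j)) (u n))
          (T (cyc N (k+1+j)) (u n)
            - T (cyc N (k+1+j)) ((List.range k).foldl (fun y j' => T (cyc N (j'+1+j)) y) (u n)))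
      push_cast
      nlinarith [tri, h1, h2, ih]
  have hfin := final N
  have hF : compShift T N j (u n)
      = (List.range N).foldl (fun y j' => T (cyc N (j'+1+j)) y) (u n) := rfl
  have hNe : (N:ℝ) * (ε/N) = ε := by field_simp
  rw [hF]
  linarith
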